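/- Let K be a field with a valuation v with value group Γ and residue field k of characteristic ≠ 2. Let t ∈ K with v(t) ∉ 2Γ. Let Q₁ = ⟨a₁,…,aₙ⟩ and Q₂ = ⟨b₁,…,b_m⟩ be diagonal quadratic forms over K with all aᵢ, bⱼ of valuation 0. If Q₁ ⊥ (⟨t⟩ ⊗ Q₂) is isotropic over K, then the residue form of Q₁ or of Q₂ is isotropic over k. -/

import Mathlib

open Finset in
lemma key_aux {K : Type*} [Field K] {Γ₀ : Type*} [LinearOrderedCommGroupWithZero Γ₀]
    (v : Valuation K Γ₀) (hv : Function.Surjective v)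
    {k : Type*} [Field k] (π : v.integer →+* k)
    (hker : ∀ x : v.integer, π x = 0 ↔ v (x : K) < 1)
    {n : ℕ} (a : Fin n → v.integer) (x : Fin n → K) (A : Γ₀) (hA : A ≠ 0)
    (hmax : ∀ i, v (x i) ≤ A) (hex : ∃ i, v (x i) = A)
    (hS : v (∑ i, (a i : K) * x i ^ 2) < A * A) :
    ∃ z : Fin n → k, z ≠ 0 ∧ ∑ i, π (a i) * z i ^ 2 = 0 := by
  obtain ⟨c, hc⟩ := hv A⁻¹
  have hmem : ∀ i, c * x i ∈ v.integer := by
    intro i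
    have : v (c * x i) ≤ A⁻¹ * A := by
      rw [map_mul, hc]; exact mul_le_mul_right (hmax i) _
    rwa [inv_mul_cancel₀ hA] at this
  set X : Fin n → v.integer := fun i => ⟨c * x i, hmem i⟩ with hXdef
  obtain ⟨i₀, hi₀⟩ := hex
  refine ⟨fun i => π (X i), ?_, ?_⟩
  · intro h
    have h0 : π (X i₀) = 0 := congrFun h i₀
    rw [hker] at h0
    have : v ((X i₀ : K)) = 1 := by
      show v (c * x i₀) = 1
      rw [map_mul, hc, hi₀, inv_mul_cancel₀ hA]
    rw [this] at h0
    exact lt_irrefl _ h0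
  · have hsum : ∑ i, π (a i) * π (X i) ^ 2 = π (∑ i, a i * X i ^ 2) := by
      rw [map_sum]
      exact Finset.sum_congr rfl fun i _ => by rw [map_mul, map_pow]
    rw [hsum, hker]
    have hcoe : ((∑ i, a i * X i ^ 2 : v.integer) : K)
        = c ^ 2 * ∑ i, (a i : K) * x i ^ 2 := by
      push_cast
      rw [Finset.mul_sum]
      exact Finset.sum_congr rfl fun i _ => by show (a i : K) * (c * x i)^2 = _; ring
    rw [hcoe, map_mul, map_pow, hc]
    calc A⁻¹ ^ 2 * v (∑ i, (a i : K) * x i ^ 2)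
        < A⁻¹ ^ 2 * (A * A) := by
          exact mul_lt_mul_of_pos_left hS (zero_lt_iff.mpr (pow_ne_zero 2 (inv_ne_zero hA)))
      _ = 1 := by rw [pow_two]; field_simp

open Finset in
lemma max_aux {K : Type*} [Field K] {Γ₀ : Type*} [LinearOrderedCommGroupWithZero Γ₀]
    (v : Valuation K Γ₀) {N : ℕ} (w : Fin N → K) :
    ∃ A : Γ₀, (∀ i, v (w i) ≤ A) ∧ (A = 0 → w = 0) ∧ (A ≠ 0 → ∃ i, v (w i) = A) := by
  rcases isEmpty_or_nonempty (Fin N) with hN | hN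
  · exact ⟨0, fun i => hN.elim i, fun _ => funext fun i => hN.elim i, fun h => (h rfl).elim⟩
  · obtain ⟨i₀, -, hi₀⟩ := Finset.exists_max_image Finset.univ (fun i => v (w i))
      Finset.univ_nonempty
    refine ⟨v (w i₀), fun i => hi₀ i (Finset.mem_univ i), fun h => ?_, fun _ => ⟨i₀, rfl⟩⟩
    funext i
    have := hi₀ i (Finset.mem_univ i)
    rw [h, le_zero_iff] at this
    exact v.zero_iff.mp this



open Finset in
/-- Residues of quadratic forms: if `K` carries a valuation `v` with value group `Γ₀`
(`v` surjective) and residue field `k` of characteristic `≠ 2` (residue map `π` on the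
valuation ring, with kernel the maximal ideal), `t ∈ K` has odd valuation, and
`Q₁ = ⟨a₁,…,aₙ⟩`, `Q₂ = ⟨b₁,…,b_m⟩` have unit coefficients, then isotropy of
`Q₁ ⊥ (⟨t⟩ ⊗ Q₂)` over `K` forces the residue form of `Q₁` or `Q₂` to be isotropic
over `k`. -/
theorem stmt0 {K : Type*} [Field K] {Γ₀ : Type*} [LinearOrderedCommGroupWithZero Γ₀]
    (v : Valuation K Γ₀) (hv : Function.Surjective v)
    {k : Type*} [Field k] (hk2 : (2 : k) ≠ 0)
    (π : v.integer →+* k) (hπ : Function.Surjective π)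
    (hker : ∀ x : v.integer, π x = 0 ↔ v (x : K) < 1)
    (t : K) (ht : ¬ ∃ s : Γ₀, v t = s * s)
    {n m : ℕ} (a : Fin n → v.integer) (b : Fin m → v.integer)
    (ha : ∀ i, v ((a i : K)) = 1) (hb : ∀ j, v ((b j : K)) = 1)
    (hiso : ∃ (x : Fin n → K) (y : Fin m → K), (x ≠ 0 ∨ y ≠ 0) ∧
      ∑ i, (a i : K) * x i ^ 2 + ∑ j, t * (b j : K) * y j ^ 2 = 0) :
    (∃ x : Fin n → k, x ≠ 0 ∧ ∑ i, π (a i) * x i ^ 2 = 0) ∨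
    (∃ y : Fin m → k, y ≠ 0 ∧ ∑ j, π (b j) * y j ^ 2 = 0) := by
  obtain ⟨x, y, hxy, heq⟩ := hiso
  obtain ⟨A, hAle, hA0, hAex⟩ := max_aux v x
  obtain ⟨B, hBle, hB0, hBex⟩ := max_aux v y
  set S : K := ∑ i, (a i : K) * x i ^ 2 with hSdef
  set T : K := ∑ j, (b j : K) * y j ^ 2 with hTdef
  have ht0 : v t ≠ 0 := fun h => ht ⟨0, by rw [h, mul_zero]⟩
  have heq' : S + t * T = 0 := by
    rw [hSdef, hTdef, Finset.mul_sum, ← heq]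
    congr 1
    exact Finset.sum_congr rfl fun j _ => by ring
  have hveq : v S = v t * v T := by
    have : S = -(t * T) := eq_neg_of_add_eq_zero_left heq'
    rw [this, Valuation.map_neg, map_mul]
  have hSle : v S ≤ A * A := by
    apply v.map_sum_le
    intro i _
    rw [map_mul, map_pow, ha i, one_mul, pow_two]
    exact mul_le_mul' (hAle i) (hAle i)
  have hTle : v T ≤ B * B := by
    apply v.map_sum_le
    intro j _
    rw [map_mul, map_pow, hb j, one_mul, pow_two]
    exact mul_le_mul' (hBle j) (hBle j)
  rcases lt_trichotomy (A * A) (v t * (B * B)) with h | h | h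
  · -- right case
    right
    have hB : B ≠ 0 := by
      intro hB
      rw [hB, mul_zero, mul_zero] at h
      exact not_lt_zero' h
    have hTlt : v T < B * B := by
      have h1 : v t * v T < v t * (B * B) := lt_of_le_of_lt (hveq ▸ hSle) h
      have := mul_lt_mul_of_pos_left h1 (zero_lt_iff.mpr (inv_ne_zero ht0))
      rwa [← mul_assoc, ← mul_assoc, inv_mul_cancel₀ ht0, one_mul, one_mul] at this
    exact key_aux v hv π hker b y B hB hBle (hBex hB) hTlt
  · -- equality: contradiction
    exfalso
    rcases eq_or_ne A 0 with hA | hA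
    · rcases eq_or_ne B 0 with hB | hB
      · rcases hxy with hx | hy
        · exact hx (hA0 hA)
        · exact hy (hB0 hB)
      · rw [hA, zero_mul] at h
        exact (mul_ne_zero ht0 (mul_ne_zero hB hB)) h.symm
    · rcases eq_or_ne B 0 with hB | hB
      · rw [hB, mul_zero, mul_zero] at h
        exact (mul_ne_zero hA hA) h
      · apply ht
        refine ⟨A * B⁻¹, ?_⟩
        have : A * B⁻¹ * (A * B⁻¹) = (A * A) * (B * B)⁻¹ := by
          rw [mul_inv_rev, mul_mul_mul_comm]
        rw [this, h, mul_assoc, mul_inv_cancel₀ (mul_ne_zero hB hB), mul_one]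
  · -- left case
    left
    have hA : A ≠ 0 := by
      intro hA
      rw [hA, mul_zero] at h
      exact not_lt_zero' h
    have hSlt : v S < A * A :=
      lt_of_le_of_lt (hveq ▸ mul_le_mul_right hTle (v t)) h
    exact key_aux v hv π hker a x A hA hAle (hAex hA) hSlt
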